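/- Every simple graph on a finite vertex type with at most 4 elements is 2-clique-colorable. -/

import Mathlib

/-- A set of vertices is a maximal clique if it is a clique and no strict
superset of it is a clique. -/
def IsMaximalClique {V : Type*} (G : SimpleGraph V) (s : Set V) : Prop :=
  G.IsClique s ∧ ∀ t : Set V, G.IsClique t → s ⊆ t → s = t

/-- A set of vertices is monochromatic under a 2-coloring `c` if `c` is
constant on it. -/
def MonochromaticOn {V : Type*} (c : V → Bool) (s : Set V) : Prop :=
  ∀ u ∈ s, ∀ v ∈ s, c u = c v

/-- `G` is 2-clique-colorable if some 2-coloring makes every maximal clique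
with at least two vertices nonmonochromatic. -/
def TwoCliqueColorable {V : Type*} (G : SimpleGraph V) : Prop :=
  ∃ c : V → Bool, ∀ s : Set V, IsMaximalClique G s →
    (∃ u ∈ s, ∃ v ∈ s, u ≠ v) → ¬ MonochromaticOn c s

/-- A graph `G` satisfies a signed edge condition `((u, v), sign)` if `u` and
`v` are adjacent when the sign is `true`, and nonadjacent when it is `false`. -/
def SatisfiesCond {m : ℕ} (G : SimpleGraph (Fin m)) (c : (Fin m × Fin m) × Bool) : Prop :=
  if c.2 = true then G.Adj c.1.1 c.1.2 else ¬ G.Adj c.1.1 c.1.2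

/- ### Auxiliary machinery -/

/-- Enumeration of the six unordered pairs in `Fin 4`. -/
def ep : Fin 6 → Fin 4 × Fin 4 := ![(0,1),(0,2),(0,3),(1,2),(1,3),(2,3)]

def adjB (b : Fin 6 → Bool) (u v : Fin 4) : Prop :=
  ∃ i, b i = true ∧ (ep i = (u, v) ∨ ep i = (v, u))

instance (b : Fin 6 → Bool) (u v : Fin 4) : Decidable (adjB b u v) :=
  Fintype.decidableExistsFintype

def FClique (b : Fin 6 → Bool) (s : Finset (Fin 4)) : Prop :=
  ∀ u ∈ s, ∀ v ∈ s, u ≠ v → adjB b u v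

instance (b : Fin 6 → Bool) (s : Finset (Fin 4)) : Decidable (FClique b s) :=
  inferInstanceAs (Decidable (∀ u ∈ s, ∀ v ∈ s, u ≠ v → adjB b u v))

def P (b : Fin 6 → Bool) : Prop := ∃ c : Fin 4 → Bool, ∀ s : Finset (Fin 4),
    FClique b s → (∀ w ∉ s, ¬ FClique b (insert w s)) → 1 < s.card →
    ∃ u ∈ s, ∃ v ∈ s, c u ≠ c v

instance : DecidablePred P := fun b =>
  inferInstanceAs (Decidable (∃ c : Fin 4 → Bool, ∀ s : Finset (Fin 4),
    FClique b s → (∀ w ∉ s, ¬ FClique b (insert w s)) → 1 < s.card →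
    ∃ u ∈ s, ∃ v ∈ s, c u ≠ c v))

theorem core : ∀ b : Fin 6 → Bool, P b := by decide

lemma ep_pair : ∀ u v : Fin 4, u ≠ v → ∃ i, ep i = (u, v) ∨ ep i = (v, u) := by decide

/-- Every graph on `Fin 4` is 2-clique-colorable. -/
theorem key4 (G : SimpleGraph (Fin 4)) : TwoCliqueColorable G := by
  classical
  set b : Fin 6 → Bool := fun i => decide (G.Adj (ep i).1 (ep i).2) with hb
  have hiff : ∀ u v : Fin 4, adjB b u v ↔ G.Adj u v := by
    intro u v
    constructor
    · rintro ⟨i, hbi, h | h⟩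
      · have := of_decide_eq_true hbi
        rwa [h] at this
      · have := of_decide_eq_true hbi
        rw [h] at this
        exact this.symm
    · intro h
      obtain ⟨i, hi⟩ := ep_pair u v (G.ne_of_adj h)
      refine ⟨i, ?_, hi⟩
      rcases hi with hi | hi <;> rw [hb] <;> simp only [hi] <;> simp [h, h.symm]
  obtain ⟨c, hc⟩ := core b
  refine ⟨c, ?_⟩
  rintro s ⟨hcl, hmax⟩ ⟨u0, hu0, v0, hv0, huv0⟩ hmono
  have hF : ∀ F : Finset (Fin 4), FClique b F ↔ G.IsClique (↑F : Set (Fin 4)) := by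
    intro F
    constructor
    · intro h x hx y hy hxy
      exact (hiff x y).1 (h x hx y hy hxy)
    · intro h x hx y hy hxy
      exact (hiff x y).2 (h hx hy hxy)
  set F := s.toFinset with hFdef
  have hFs : (↑F : Set (Fin 4)) = s := Set.coe_toFinset s
  have h1 : FClique b F := (hF F).2 (hFs ▸ hcl)
  have h2 : ∀ w ∉ F, ¬ FClique b (insert w F) := by
    intro w hw hcl'
    have : G.IsClique (↑(insert w F) : Set (Fin 4)) := (hF _).1 hcl'
    rw [Finset.coe_insert, hFs] at this
    have heq := hmax _ this (Set.subset_insert w s)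
    have hws : w ∈ s := by rw [heq]; exact Set.mem_insert w s
    exact hw (by simp [hFdef, hws])
  have h3 : 1 < F.card := by
    have : ({u0, v0} : Finset (Fin 4)) ⊆ F := by
      intro x hx
      simp only [Finset.mem_insert, Finset.mem_singleton] at hx
      rcases hx with rfl | rfl <;> simp [hFdef, hu0, hv0]
    calc 1 < ({u0, v0} : Finset (Fin 4)).card := by
            rw [Finset.card_insert_of_notMem (by simpa using huv0)]; simp
      _ ≤ F.card := Finset.card_le_card this
  obtain ⟨u, hu, v, hv, hne⟩ := hc F h1 h2 h3
  rw [hFdef, Set.mem_toFinset] at hu hv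
  exact hne (hmono u hu v hv)

/-- Transfer along a graph embedding `map`. -/
lemma transfer {V : Type*} (ι : V ↪ Fin 4) (G : SimpleGraph V)
    (h : TwoCliqueColorable (G.map ι)) : TwoCliqueColorable G := by
  obtain ⟨c4, hc4⟩ := h
  refine ⟨fun v => c4 (ι v), ?_⟩
  rintro s ⟨hcl, hmax⟩ ⟨u0, hu0, v0, hv0, huv0⟩ hmono
  have hclim : (G.map ι).IsClique (ι '' s) := by
    rintro x ⟨a, ha, rfl⟩ y ⟨b, hb', rfl⟩ hxy
    have hab : a ≠ b := fun e => hxy (by rw [e])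
    exact ⟨hxy, a, b, hcl ha hb' hab, rfl, rfl⟩
  have hmaxim : IsMaximalClique (G.map ι) (ι '' s) := by
    refine ⟨hclim, fun t ht hsub => ?_⟩
    -- every element of t is in the range of ι
    have htwo : (ι u0 : Fin 4) ≠ ι v0 := fun e => huv0 (ι.injective e)
    have hrange : ∀ x ∈ t, ∃ a, ι a = x := by
      intro x hx
      obtain ⟨y, hy, hyx⟩ : ∃ y ∈ t, y ≠ x := by
        by_cases hx0 : x = ι u0
        · exact ⟨ι v0, hsub ⟨v0, hv0, rfl⟩, by rw [hx0]; exact htwo.symm⟩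
        · exact ⟨ι u0, hsub ⟨u0, hu0, rfl⟩, fun e => hx0 e.symm⟩
      obtain ⟨-, a, b, -, hax, hby⟩ := ht hx hy (Ne.symm hyx)
      exact ⟨a, hax⟩
    set s' : Set V := ι ⁻¹' t with hs'
    have hts' : t = ι '' s' := by
      apply Set.Subset.antisymm
      · intro x hx
        obtain ⟨a, rfl⟩ := hrange x hx
        exact ⟨a, hx, rfl⟩
      · rintro x ⟨a, ha, rfl⟩; exact ha
    have hcls' : G.IsClique s' := by
      intro a ha b hb' hab
      have : (G.map ι).Adj (ι a) (ι b) := ht ha hb' (fun e => hab (ι.injective e))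
      obtain ⟨-, a', b', hadj, ha', hb''⟩ := this
      rwa [ι.injective ha', ι.injective hb''] at hadj
    have hss' : s ⊆ s' := by
      intro a ha
      exact hsub ⟨a, ha, rfl⟩
    rw [hts', ← hmax s' hcls' hss']
  have : ¬ MonochromaticOn c4 (ι '' s) := by
    apply hc4 _ hmaxim
    exact ⟨ι u0, ⟨u0, hu0, rfl⟩, ι v0, ⟨v0, hv0, rfl⟩, fun e => huv0 (ι.injective e)⟩
  apply this
  rintro x ⟨a, ha, rfl⟩ y ⟨b, hb', rfl⟩
  exact hmono a ha b hb'

/-- Every graph on at most 4 vertices is 2-clique-colorable. -/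
theorem twoCliqueColorable_of_card_le_four {V : Type*} [Fintype V]
    (hV : Fintype.card V ≤ 4) (G : SimpleGraph V) :
    TwoCliqueColorable G := by
  have ι : V ↪ Fin 4 := (Fintype.equivFin V).toEmbedding.trans (Fin.castLEEmb hV)
  exact transfer ι G (key4 _)
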